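/- For every positive integer n, the cyclotomic polynomial Φ_{4n} over ℚ is a sum of two squares in ℚ[X]: there exist polynomials x, y ∈ ℚ[X] with Φ_{4n} = x² + y². -/

import Mathlib

open Polynomial

/-- Every polynomial splits into even and odd parts. -/
lemma even_odd_decomp' (f : Polynomial ℚ) :
    ∃ a b : Polynomial ℚ, f = expand ℚ 2 a + X * expand ℚ 2 b := by
  induction f using Polynomial.induction_on' with
  | add p q hp hq =>
    obtain ⟨a1, b1, h1⟩ := hp
    obtain ⟨a2, b2, h2⟩ := hq
    exact ⟨a1 + a2, b1 + b2, by rw [h1, h2, map_add, map_add]; ring⟩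
  | monomial n c =>
    rcases Nat.even_or_odd n with ⟨k, hk⟩ | ⟨k, hk⟩
    · refine ⟨C c * X ^ k, 0, ?_⟩
      have hn2 : 2 * k = n := by omega
      rw [map_zero, mul_zero, add_zero, map_mul, expand_C, map_pow, expand_X,
        ← pow_mul, hn2, C_mul_X_pow_eq_monomial]
    · refine ⟨0, C c * X ^ k, ?_⟩
      have hn2 : 2 * k + 1 = n := by omega
      rw [map_zero, zero_add, map_mul, expand_C, map_pow, expand_X, ← pow_mul,
        mul_left_comm, ← pow_succ', hn2, C_mul_X_pow_eq_monomial]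

lemma expand_two_comp_neg (p : Polynomial ℚ) :
    (expand ℚ 2 p).comp (-X) = expand ℚ 2 p := by
  rw [expand_eq_comp_X_pow, Polynomial.comp_assoc]
  congr 1
  simp [neg_sq]

/-- `Φ_{2m}(X) = Φ_m(-X)` for odd `m > 1`. -/
lemma cyclotomic_two_mul_comp_neg (m : ℕ) (hm : Odd m) (h1 : 1 < m) :
    cyclotomic (2 * m) ℚ = (cyclotomic m ℚ).comp (-X) := by
  have h2m : (2 * m : ℕ) ≠ 0 := by omega
  obtain ⟨ζ, hζ⟩ : ∃ ζ : ℂ, IsPrimitiveRoot ζ (2 * m) :=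
    ⟨_, Complex.isPrimitiveRoot_exp _ h2m⟩
  have hζm : ζ ^ m = -1 := by
    have h2 : (ζ ^ m) ^ 2 = 1 := by
      rw [← pow_mul, mul_comm m 2, hζ.pow_eq_one]
    have hne : ζ ^ m ≠ 1 := hζ.pow_ne_one_of_pos_of_lt (by omega) (by omega)
    have h0 : (ζ ^ m - 1) * (ζ ^ m + 1) = 0 := by linear_combination h2
    rcases mul_eq_zero.mp h0 with h | h
    · exact absurd (sub_eq_zero.mp h) hne
    · exact eq_neg_of_add_eq_zero_left h
  have hprim : IsPrimitiveRoot (-ζ) m := by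
    constructor
    · rw [neg_pow, hζm, Odd.neg_one_pow hm]
      ring
    · intro l hl
      have h2l : ζ ^ (2 * l) = 1 := by
        have he : ((-ζ) ^ l) ^ 2 = 1 := by rw [hl]; norm_num
        rw [← pow_mul, mul_comm l 2, Even.neg_pow ⟨l, by ring⟩] at he
        exact he
      obtain ⟨c, hc⟩ := hζ.dvd_of_pow_eq_one _ h2l
      refine ⟨c, ?_⟩
      rw [mul_assoc] at hc
      exact Nat.eq_of_mul_eq_mul_left (by norm_num) hc
  have hmin2 : cyclotomic (2 * m) ℚ = minpoly ℚ ζ :=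
    cyclotomic_eq_minpoly_rat hζ (by omega)
  have hmin1 : cyclotomic m ℚ = minpoly ℚ (-ζ) :=
    cyclotomic_eq_minpoly_rat hprim (by omega)
  have hroot : (Polynomial.aeval ζ) ((cyclotomic m ℚ).comp (-X)) = 0 := by
    rw [aeval_comp, hmin1]
    simp
  have hdvd : cyclotomic (2 * m) ℚ ∣ (cyclotomic m ℚ).comp (-X) := by
    rw [hmin2]
    exact minpoly.dvd ℚ ζ hroot
  have heven : Even (Nat.totient m) := Nat.totient_even (by rw [Nat.odd_iff] at hm; omega)
  have hcop : Nat.Coprime 2 m :=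
    (Nat.prime_two.coprime_iff_not_dvd).mpr (by rw [Nat.odd_iff] at hm; omega)
  have hdeg : ((cyclotomic m ℚ).comp (-X)).natDegree ≤ (cyclotomic (2 * m) ℚ).natDegree := by
    rw [natDegree_comp, natDegree_cyclotomic, natDegree_cyclotomic,
      Nat.totient_mul hcop, Nat.totient_two]
    simp [natDegree_neg]
  have hlead : (cyclotomic (2 * m) ℚ).leadingCoeff = ((cyclotomic m ℚ).comp (-X)).leadingCoeff := by
    rw [leadingCoeff_comp (by simp [natDegree_neg] : (-X : Polynomial ℚ).natDegree ≠ 0)]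
    simp [(cyclotomic.monic _ ℚ).leadingCoeff, natDegree_cyclotomic, heven.neg_one_pow]
  exact eq_of_dvd_of_natDegree_le_of_leadingCoeff hdvd hdeg hlead

/-- The odd case. -/
lemma odd_case (m : ℕ) (hm : Odd m) (hpos : 0 < m) :
    ∃ x y : Polynomial ℚ, cyclotomic (4 * m) ℚ = x ^ 2 + y ^ 2 := by
  rcases eq_or_lt_of_le (show 1 ≤ m from hpos) with h1 | h1
  · -- m = 1
    have hm1 : m = 1 := h1.symm
    subst hm1
    refine ⟨X, 1, ?_⟩
    have h4 := cyclotomic_expand_eq_cyclotomic Nat.prime_two (dvd_refl 2) ℚ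
    rw [cyclotomic_two] at h4
    rw [mul_one, show (4 : ℕ) = 2 * 2 from rfl, ← h4]
    simp [map_add, expand_X]
  · set f := cyclotomic m ℚ with hf
    obtain ⟨a, b, hab⟩ := even_odd_decomp' f
    have hcompneg : f.comp (-X) = expand ℚ 2 a - X * expand ℚ 2 b := by
      rw [hab, add_comp, mul_comp, X_comp, expand_two_comp_neg, expand_two_comp_neg]
      ring
    have hg : expand ℚ 2 (a ^ 2 - X * b ^ 2) = f * f.comp (-X) := by
      rw [map_sub, map_mul, map_pow, map_pow, expand_X, hcompneg, hab]
      ring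
    have hmulid : expand ℚ 2 f = f * f.comp (-X) := by
      have h2 := cyclotomic_expand_eq_cyclotomic_mul Nat.prime_two
        (by rw [Nat.odd_iff] at hm; omega) ℚ (n := m)
      rw [hf, h2, mul_comm m 2, cyclotomic_two_mul_comp_neg m hm h1]
      ring
    have hfg : a ^ 2 - X * b ^ 2 = f := expand_injective (by norm_num) (hg.trans hmulid.symm)
    refine ⟨a.comp (-X ^ 2), X * b.comp (-X ^ 2), ?_⟩
    have hkey : cyclotomic (4 * m) ℚ = f.comp (-X ^ 2) := by
      have h3 := cyclotomic_expand_eq_cyclotomic Nat.prime_two (dvd_mul_right 2 m) ℚ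
      rw [show (4 : ℕ) * m = 2 * m * 2 by ring, ← h3,
        cyclotomic_two_mul_comp_neg m hm h1, expand_eq_comp_X_pow, Polynomial.comp_assoc]
      congr 1
      simp
    rw [hkey, ← hfg, sub_comp, mul_comp, X_comp, pow_comp, pow_comp]
    ring

/-- For every positive integer `n`, the cyclotomic polynomial `Φ₄ₙ` over `ℚ` is a sum of
two squares in `ℚ[X]`. -/
theorem cyclotomic_sum_two_squares (n : ℕ) (hn : 0 < n) :
    ∃ x y : Polynomial ℚ, Polynomial.cyclotomic (4 * n) ℚ = x ^ 2 + y ^ 2 := by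
  have hself : 2 ^ (n.factorization 2) * (n / 2 ^ (n.factorization 2)) = n :=
    Nat.ordProj_mul_ordCompl_eq_self n 2
  set m := n / 2 ^ (n.factorization 2) with hm
  have h2 : ¬ (2 ∣ m) := Nat.not_dvd_ordCompl Nat.prime_two hn.ne'
  have hodd : Odd m := Nat.odd_iff.mpr (by omega)
  have hmpos : 0 < m := Nat.ordCompl_pos 2 hn.ne'
  suffices H : ∀ k, ∃ x y : Polynomial ℚ, cyclotomic (4 * (2 ^ k * m)) ℚ = x ^ 2 + y ^ 2 by
    have := H (n.factorization 2)
    rwa [hself] at this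
  intro k
  induction k with
  | zero => simpa using odd_case m hodd hmpos
  | succ k ih =>
    obtain ⟨x, y, hxy⟩ := ih
    refine ⟨expand ℚ 2 x, expand ℚ 2 y, ?_⟩
    have h3 := cyclotomic_expand_eq_cyclotomic Nat.prime_two
      (⟨2 * (2 ^ k * m), by ring⟩ : (2:ℕ) ∣ 4 * (2 ^ k * m)) ℚ
    rw [show 4 * (2 ^ (k + 1) * m) = 4 * (2 ^ k * m) * 2 by ring, ← h3, hxy, map_add,
      map_pow, map_pow]
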